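/- Under the MNL model with attraction parameters v_0 = 1 and v_i > 0 for i ∈ [N], uniform revenues r_i = r_max for all i ∈ [N], and constant KL-robust radius ρ ≥ 0, the robust expected revenue of an assortment S equals sup_{λ ≥ 0} { −λ·log( exp(−r_max/λ) + (1 − exp(−r_max/λ))/(1 + Σ_{i∈S} v_i) ) − λρ }, and this quantity is nondecreasing in Σ_{i∈S} v_i. Consequently, among all assortments of size at most K, the robust expected revenue is maximized by the set of the K items with the largest attraction parameters v_i. -/

import Mathlib

open Finset

/-- Supremum over dual variables `λ ≥ 0` of a real-valued function. -/
noncomputable def dualSup (f : ℝ → ℝ) : ℝ := sSup (f '' Set.Ici (0 : ℝ))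

lemma dualSup_congr' {f g : ℝ → ℝ} (h : ∀ l, f l = g l) :
    sSup (f '' Set.Ici (0:ℝ)) = sSup (g '' Set.Ici (0:ℝ)) := by
  congr 1; ext x
  constructor
  · rintro ⟨l, hl, rfl⟩; exact ⟨l, hl, (h l).symm⟩
  · rintro ⟨l, hl, rfl⟩; exact ⟨l, hl, h l⟩

lemma dualSup_mono' {f g : ℝ → ℝ} (M : ℝ) (hg : ∀ l, 0 ≤ l → g l ≤ M)
    (hfg : ∀ l, 0 ≤ l → f l ≤ g l) :
    sSup (f '' Set.Ici (0:ℝ)) ≤ sSup (g '' Set.Ici (0:ℝ)) := by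
  have hne : (f '' Set.Ici (0:ℝ)).Nonempty := ⟨f 0, 0, Set.self_mem_Ici, rfl⟩
  have hbdd : BddAbove (g '' Set.Ici (0:ℝ)) := by
    refine ⟨M, ?_⟩; rintro x ⟨l, hl, rfl⟩; exact hg l hl
  apply csSup_le hne
  rintro x ⟨l, hl, rfl⟩
  exact le_trans (hfg l hl) (le_csSup hbdd ⟨l, hl, rfl⟩)

lemma inner_eq (v : ℕ → ℝ) (N : ℕ) (rmax : ℝ) (hv0 : v 0 = 1)
    (hv : ∀ i ∈ Finset.Icc 1 N, 0 < v i) (S : Finset ℕ) (hS : S ⊆ Finset.Icc 1 N) (l : ℝ) :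
    ∑ i ∈ insert 0 S, (v i / ∑ j ∈ insert 0 S, v j) * Real.exp (-(if i = 0 then 0 else rmax) / l)
      = Real.exp (-rmax / l) + (1 - Real.exp (-rmax / l)) / (1 + ∑ i ∈ S, v i) := by
  have h0 : (0:ℕ) ∉ S := fun h => by simpa using hS h
  have hspos : 0 ≤ ∑ i ∈ S, v i := Finset.sum_nonneg fun i hi => (hv i (hS hi)).le
  have hV : ∑ j ∈ insert 0 S, v j = 1 + ∑ i ∈ S, v i := by
    rw [Finset.sum_insert h0, hv0]
  rw [Finset.sum_insert h0, hV]
  have hrw : ∀ i ∈ S, (v i / (1 + ∑ i ∈ S, v i)) * Real.exp (-(if i = 0 then 0 else rmax) / l)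
      = (v i * Real.exp (-rmax / l)) / (1 + ∑ i ∈ S, v i) := by
    intro i hi
    rw [if_neg (ne_of_mem_of_not_mem hi h0)]
    ring
  rw [Finset.sum_congr rfl hrw, ← Finset.sum_div, ← Finset.sum_mul]
  have hVpos : (0:ℝ) < 1 + ∑ i ∈ S, v i := by linarith
  simp only [if_pos rfl, neg_zero, zero_div, Real.exp_zero, hv0]
  field_simp
  norm_num
  ring

lemma g_bdd (rmax ρ : ℝ) (hr : 0 < rmax) (hρ : 0 ≤ ρ) {s : ℝ} (hs : 0 ≤ s)
    (l : ℝ) (hl : 0 ≤ l) :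
    -l * Real.log (Real.exp (-rmax/l) + (1 - Real.exp (-rmax/l))/(1+s)) - l*ρ ≤ rmax := by
  rcases hl.eq_or_lt with rfl | hl
  · simpa using hr.le
  · set e := Real.exp (-rmax/l) with he
    have he0 : 0 < e := Real.exp_pos _
    have he1 : e ≤ 1 :=
      Real.exp_le_one_iff.mpr (div_nonpos_of_nonpos_of_nonneg (by linarith) hl.le)
    have h1s : (0:ℝ) < 1 + s := by linarith
    have hinner : e ≤ e + (1-e)/(1+s) := by
      have : 0 ≤ (1-e)/(1+s) := div_nonneg (by linarith) h1s.le
      linarith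
    have hlog : -rmax/l ≤ Real.log (e + (1-e)/(1+s)) := by
      calc -rmax/l = Real.log e := (Real.log_exp _).symm
        _ ≤ _ := Real.log_le_log he0 hinner
    have h1 : -l * Real.log (e + (1-e)/(1+s)) ≤ -l * (-rmax/l) := by
      apply mul_le_mul_of_nonpos_left hlog (by linarith)
    have h2 : -l * (-rmax/l) = rmax := by field_simp
    nlinarith [mul_nonneg hl.le hρ]

lemma g_mono (rmax ρ : ℝ) (hr : 0 < rmax) (hρ : 0 ≤ ρ) {s s' : ℝ} (hs : 0 ≤ s) (hss : s ≤ s')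
    (l : ℝ) (hl : 0 ≤ l) :
    -l * Real.log (Real.exp (-rmax/l) + (1 - Real.exp (-rmax/l))/(1+s)) - l*ρ ≤
    -l * Real.log (Real.exp (-rmax/l) + (1 - Real.exp (-rmax/l))/(1+s')) - l*ρ := by
  rcases hl.eq_or_lt with rfl | hl
  · simp
  · set e := Real.exp (-rmax/l) with he
    have he0 : 0 < e := Real.exp_pos _
    have he1 : e ≤ 1 :=
      Real.exp_le_one_iff.mpr (div_nonpos_of_nonpos_of_nonneg (by linarith) hl.le)
    have h1s : (0:ℝ) < 1 + s := by linarith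
    have h1s' : (0:ℝ) < 1 + s' := by linarith
    have hdiv : (1-e)/(1+s') ≤ (1-e)/(1+s) :=
      div_le_div_of_nonneg_left (by linarith) h1s (by linarith)
    have hinpos : 0 < e + (1-e)/(1+s') := by
      have : 0 ≤ (1-e)/(1+s') := div_nonneg (by linarith) h1s'.le
      linarith
    have hlog : Real.log (e + (1-e)/(1+s')) ≤ Real.log (e + (1-e)/(1+s)) :=
      Real.log_le_log hinpos (by linarith)
    have h3 : -l * Real.log (e + (1-e)/(1+s)) ≤ -l * Real.log (e + (1-e)/(1+s')) :=
      mul_le_mul_of_nonpos_left hlog (by linarith)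
    linarith

lemma sum_le_topK (N K : ℕ) (v : ℕ → ℝ) (hv : ∀ i ∈ Finset.Icc 1 N, 0 < v i)
    (Sstar : Finset ℕ) (hst : Sstar ⊆ Finset.Icc 1 N) (hcard : Sstar.card = K)
    (htop : ∀ i ∈ Finset.Icc 1 N, i ∉ Sstar → ∀ j ∈ Sstar, v i ≤ v j)
    (S : Finset ℕ) (hS : S ⊆ Finset.Icc 1 N) (hSc : S.card ≤ K) :
    ∑ i ∈ S, v i ≤ ∑ i ∈ Sstar, v i := by
  have hsplitS : ∑ i ∈ S ∩ Sstar, v i + ∑ i ∈ S \ Sstar, v i = ∑ i ∈ S, v i :=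
    Finset.sum_inter_add_sum_sdiff S Sstar v
  have hsplitT : ∑ i ∈ Sstar ∩ S, v i + ∑ i ∈ Sstar \ S, v i = ∑ i ∈ Sstar, v i :=
    Finset.sum_inter_add_sum_sdiff Sstar S v
  rw [Finset.inter_comm] at hsplitT
  have hc1 : (S \ Sstar).card + (S ∩ Sstar).card = S.card :=
    Finset.card_sdiff_add_card_inter S Sstar
  have hc2 : (Sstar \ S).card + (Sstar ∩ S).card = Sstar.card :=
    Finset.card_sdiff_add_card_inter Sstar S
  rw [Finset.inter_comm] at hc2
  have hAB : (S \ Sstar).card ≤ (Sstar \ S).card := by omega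
  have key : ∑ i ∈ S \ Sstar, v i ≤ ∑ i ∈ Sstar \ S, v i := by
    rcases Finset.eq_empty_or_nonempty (Sstar \ S) with hB | hB
    · have : S \ Sstar = ∅ :=
        Finset.card_eq_zero.mp (by rw [hB] at hAB; simpa using hAB)
      simp [this, hB]
    · obtain ⟨j0, hj0B, hj0min⟩ := Finset.exists_min_image (Sstar \ S) v hB
      have hj0star : j0 ∈ Sstar := (Finset.mem_sdiff.mp hj0B).1
      have hj0pos : 0 < v j0 := hv j0 (hst hj0star)
      have h1 : ∑ i ∈ S \ Sstar, v i ≤ (S \ Sstar).card • v j0 := by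
        apply Finset.sum_le_card_nsmul
        intro i hi
        have hiS := Finset.mem_sdiff.mp hi
        exact htop i (hS hiS.1) hiS.2 j0 hj0star
      have h2 : (Sstar \ S).card • v j0 ≤ ∑ i ∈ Sstar \ S, v i :=
        Finset.card_nsmul_le_sum _ _ _ hj0min
      have h3 : ((S \ Sstar).card : ℝ) * v j0 ≤ ((Sstar \ S).card : ℝ) * v j0 :=
        mul_le_mul_of_nonneg_right (Nat.cast_le.mpr hAB) hj0pos.le
      simp only [nsmul_eq_mul] at h1 h2
      linarith
  linarith

/-- Under the MNL model with `v 0 = 1`, `v i > 0` for `i ∈ [N]`, uniform revenues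
`r i = r_max` on items (`r 0 = 0`), and constant KL-robust radius `ρ ≥ 0`, the dual
representation of the robust expected revenue of an assortment `S` simplifies to
`sup_{λ ≥ 0} {-λ log (exp (-r_max/λ) + (1 - exp (-r_max/λ)) / (1 + ∑_{i ∈ S} v i)) - λρ}`;
this quantity is nondecreasing in `∑_{i ∈ S} v i`; and consequently, among all
assortments of size at most `K`, it is maximized by the `K` items with the largest
attraction parameters. -/
theorem uniform_revenue_robust_optimal (N K : ℕ) (v : ℕ → ℝ) (rmax ρ : ℝ)
    (hv0 : v 0 = 1) (hv : ∀ i ∈ Finset.Icc 1 N, 0 < v i) (hr : 0 < rmax) (hρ : 0 ≤ ρ) :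
    -- (1) simplification of the dual representation under uniform revenues
    (∀ S : Finset ℕ, S ⊆ Finset.Icc 1 N →
      dualSup (fun l =>
          -l * Real.log (∑ i ∈ insert 0 S,
              (v i / ∑ j ∈ insert 0 S, v j) *
                Real.exp (-(if i = 0 then 0 else rmax) / l)) - l * ρ) =
        dualSup (fun l =>
          -l * Real.log (Real.exp (-rmax / l) +
              (1 - Real.exp (-rmax / l)) / (1 + ∑ i ∈ S, v i)) - l * ρ)) ∧
    -- (2) the simplified value is nondecreasing in the total attraction
    (∀ s s' : ℝ, 0 ≤ s → s ≤ s' →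
      dualSup (fun l =>
          -l * Real.log (Real.exp (-rmax / l) + (1 - Real.exp (-rmax / l)) / (1 + s)) - l * ρ) ≤
        dualSup (fun l =>
          -l * Real.log (Real.exp (-rmax / l) + (1 - Real.exp (-rmax / l)) / (1 + s')) - l * ρ)) ∧
    -- (3) the top-K assortment is optimal among assortments of cardinality at most K
    (∀ Sstar : Finset ℕ, Sstar ⊆ Finset.Icc 1 N → Sstar.card = K →
      (∀ i ∈ Finset.Icc 1 N, i ∉ Sstar → ∀ j ∈ Sstar, v i ≤ v j) →
      ∀ S : Finset ℕ, S ⊆ Finset.Icc 1 N → S.card ≤ K →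
        dualSup (fun l =>
            -l * Real.log (∑ i ∈ insert 0 S,
                (v i / ∑ j ∈ insert 0 S, v j) *
                  Real.exp (-(if i = 0 then 0 else rmax) / l)) - l * ρ) ≤
          dualSup (fun l =>
              -l * Real.log (∑ i ∈ insert 0 Sstar,
                  (v i / ∑ j ∈ insert 0 Sstar, v j) *
                    Real.exp (-(if i = 0 then 0 else rmax) / l)) - l * ρ)) := by
  have h1 : ∀ S : Finset ℕ, S ⊆ Finset.Icc 1 N →
      dualSup (fun l =>
          -l * Real.log (∑ i ∈ insert 0 S,
              (v i / ∑ j ∈ insert 0 S, v j) *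
                Real.exp (-(if i = 0 then 0 else rmax) / l)) - l * ρ) =
        dualSup (fun l =>
          -l * Real.log (Real.exp (-rmax / l) +
              (1 - Real.exp (-rmax / l)) / (1 + ∑ i ∈ S, v i)) - l * ρ) := by
    intro S hS
    unfold dualSup
    exact dualSup_congr' fun l => by rw [inner_eq v N rmax hv0 hv S hS l]
  have h2 : ∀ s s' : ℝ, 0 ≤ s → s ≤ s' →
      dualSup (fun l =>
          -l * Real.log (Real.exp (-rmax / l) + (1 - Real.exp (-rmax / l)) / (1 + s)) - l * ρ) ≤
        dualSup (fun l =>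
          -l * Real.log (Real.exp (-rmax / l) + (1 - Real.exp (-rmax / l)) / (1 + s')) - l * ρ) := by
    intro s s' hs hss
    unfold dualSup
    exact dualSup_mono' rmax (fun l hl => g_bdd rmax ρ hr hρ (le_trans hs hss) l hl)
      (fun l hl => g_mono rmax ρ hr hρ hs hss l hl)
  refine ⟨h1, h2, ?_⟩
  intro Sstar hst hcard htop S hS hSc
  rw [h1 S hS, h1 Sstar hst]
  exact h2 _ _ (Finset.sum_nonneg fun i hi => (hv i (hS hi)).le)
    (sum_le_topK N K v hv Sstar hst hcard htop S hS hSc)
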